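/- Let K, μ, p, Π, E, φ, Σ, Θ, Q : ℝ → ℝ be differentiable functions with K(t) > 0 for all t, and write s = Σ − (2/3)Θ. Suppose that at every t: (i) K′ = s·K, and (ii) (E − μ/3 + Π/2)′ = (3E/2 + Π/4)·s + (1/2)·φ·Q − (1/2)·(μ + p)·s. Define M = (μ/3 − E − Π/2)/(2·K^(3/2)). Then M′ = (1/(4·K^(3/2)))·(s·(p + Π) − φ·Q). -/

import Mathlib

/-- Time evolution of the Misner–Sharp mass: given K̇ = sK and the Bianchi
evolution equation for E − μ/3 + Π/2, the mass M = (μ/3 − E − Π/2)/(2K^(3/2))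
satisfies Ṁ = (1/(4K^(3/2)))·(s(p + Π) − φQ). -/
theorem misner_sharp_mass_evolution
    (K μ p Pa E φ Sg Θ Q : ℝ → ℝ)
    (hKdiff : Differentiable ℝ K) (hμdiff : Differentiable ℝ μ)
    (hpdiff : Differentiable ℝ p) (hPadiff : Differentiable ℝ Pa)
    (hEdiff : Differentiable ℝ E) (hφdiff : Differentiable ℝ φ)
    (hSgdiff : Differentiable ℝ Sg) (hΘdiff : Differentiable ℝ Θ)
    (hQdiff : Differentiable ℝ Q)
    (hKpos : ∀ t, 0 < K t)
    (s : ℝ → ℝ) (hs : s = fun t => Sg t - (2/3) * Θ t)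
    (hKdot : ∀ t, deriv K t = s t * K t)
    (hBianchi : ∀ t, deriv (fun t => E t - μ t / 3 + Pa t / 2) t
      = (3 * E t / 2 + Pa t / 4) * s t + (1/2) * φ t * Q t
        - (1/2) * (μ t + p t) * s t)
    (M : ℝ → ℝ)
    (hM : M = fun t => (μ t / 3 - E t - Pa t / 2) / (2 * (K t) ^ ((3:ℝ)/2))) :
    ∀ t, deriv M t
      = (1 / (4 * (K t) ^ ((3:ℝ)/2))) * (s t * (p t + Pa t) - φ t * Q t) := by
  intro t
  have hK := hKpos t
  have hKne : K t ≠ 0 := hK.ne'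
  -- derivative of A := E - μ/3 + Pa/2
  have hAdiff : Differentiable ℝ (fun t => E t - μ t / 3 + Pa t / 2) :=
    (hEdiff.sub (hμdiff.div_const 3)).add (hPadiff.div_const 2)
  have hAderiv : HasDerivAt (fun t => E t - μ t / 3 + Pa t / 2)
      ((3 * E t / 2 + Pa t / 4) * s t + (1/2) * φ t * Q t
        - (1/2) * (μ t + p t) * s t) t := by
    have h := (hAdiff t).hasDerivAt
    rwa [hBianchi t] at h
  -- numerator N = - A
  have hNderiv : HasDerivAt (fun t => μ t / 3 - E t - Pa t / 2)
      (-((3 * E t / 2 + Pa t / 4) * s t + (1/2) * φ t * Q t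
        - (1/2) * (μ t + p t) * s t)) t := by
    have h := hAderiv.fun_neg
    have heq : (fun u => -(E u - μ u / 3 + Pa u / 2))
        = (fun u => μ u / 3 - E u - Pa u / 2) := by funext u; ring
    rwa [heq] at h
  -- denominator
  have hKderiv : HasDerivAt K (s t * K t) t := by
    have h := (hKdiff t).hasDerivAt
    rwa [hKdot t] at h
  have hgderiv : HasDerivAt (fun t => (K t) ^ ((3:ℝ)/2))
      (s t * K t * ((3:ℝ)/2) * (K t) ^ ((3:ℝ)/2 - 1)) t :=
    hKderiv.rpow_const (Or.inl hKne)
  have hDderiv : HasDerivAt (fun t => 2 * (K t) ^ ((3:ℝ)/2))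
      (2 * (s t * K t * ((3:ℝ)/2) * (K t) ^ ((3:ℝ)/2 - 1))) t :=
    hgderiv.const_mul 2
  have hxpos : (0:ℝ) < (K t) ^ ((3:ℝ)/2) := Real.rpow_pos_of_pos hK _
  have hDne : 2 * (K t) ^ ((3:ℝ)/2) ≠ 0 := by positivity
  have hMderiv := hNderiv.fun_div hDderiv hDne
  rw [hM]
  rw [hMderiv.deriv]
  have hxy : K t * (K t) ^ ((3:ℝ)/2 - 1) = (K t) ^ ((3:ℝ)/2) := by
    have h : (K t) ^ ((1:ℝ)) * (K t) ^ ((3:ℝ)/2 - 1) = (K t) ^ ((3:ℝ)/2) := by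
      rw [← Real.rpow_add hK]; norm_num
    rwa [Real.rpow_one] at h
  set x := (K t) ^ ((3:ℝ)/2) with hx
  set y := (K t) ^ ((3:ℝ)/2 - 1) with hy
  have hxne : x ≠ 0 := hxpos.ne'
  have hKy : s t * K t * ((3:ℝ)/2) * y = (3/2) * s t * x := by
    rw [← hxy]; ring
  rw [hKy]
  field_simp
  ring
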